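/- Let c ∈ ℕ with c ≥ 2, let α ∈ ℂ with α^c ≠ 1, and let n ∈ ℕ₀. Then Σ_{ξ ∈ μ_c, ξ ≠ 1} ℬ_n(α·ξ) = c^{n+1}·ℬ_n(α^c) − ℬ_n(α). (All arguments occurring are different from 1 because α^c ≠ 1, so every twisted Bernoulli number in the formula is defined.) -/

import Mathlib

/-- The twisted Bernoulli numbers `ℬ_n(ξ)`, defined by
`1/(1 - ξ·exp t) = Σ_{n≥0} ℬ_n(ξ) tⁿ/n!` in `ℂ[[t]]`. -/
noncomputable def twistedBernoulli (ξ : ℂ) (n : ℕ) : ℂ :=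
  (Nat.factorial n : ℂ) *
    PowerSeries.coeff n (1 - PowerSeries.C ξ * PowerSeries.exp ℂ)⁻¹

open PowerSeries Polynomial Finset in
private lemma tb_sum_pow_nthRoots {c k : ℕ} (hc : 0 < c) (hk : k < c) :
    ∑ ξ ∈ nthRootsFinset c (1 : ℂ), ξ ^ k = if k = 0 then (c : ℂ) else 0 := by
  obtain ⟨ζ, hζ⟩ : ∃ ζ : ℂ, IsPrimitiveRoot ζ c :=
    ⟨_, Complex.isPrimitiveRoot_exp c hc.ne'⟩
  rcases eq_or_ne k 0 with rfl | hk0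
  · simp [hζ.card_nthRootsFinset]
  · rw [if_neg hk0]
    have hζmem : ζ ∈ nthRootsFinset c (1 : ℂ) := (mem_nthRootsFinset hc 1).2 hζ.pow_eq_one
    have hbij : ∑ ξ ∈ nthRootsFinset c (1 : ℂ), ξ ^ k
        = ∑ ξ ∈ nthRootsFinset c (1 : ℂ), (ζ * ξ) ^ k := by
      refine (Finset.sum_nbij' (fun ξ => ζ * ξ) (fun ξ => ζ⁻¹ * ξ) ?_ ?_ ?_ ?_ ?_).symm
      · intro ξ hξ; simpa using mul_mem_nthRootsFinset hζmem hξ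
      · intro ξ hξ
        have hζ0 : ζ ≠ 0 := ne_zero_of_mem_nthRootsFinset one_ne_zero hζmem
        have : ζ⁻¹ ∈ nthRootsFinset c (1 : ℂ) := by
          rw [mem_nthRootsFinset hc 1, inv_pow, hζ.pow_eq_one, inv_one]
        simpa using mul_mem_nthRootsFinset this hξ
      · intro ξ _; field_simp [ne_zero_of_mem_nthRootsFinset one_ne_zero hζmem]
      · intro ξ _; field_simp [ne_zero_of_mem_nthRootsFinset one_ne_zero hζmem]
      · intro ξ _; rfl
    have hζk : ζ ^ k ≠ 1 := hζ.pow_ne_one_of_pos_of_lt hk0 hk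
    have := hbij
    simp only [mul_pow, ← Finset.mul_sum] at this
    have h2 : (ζ ^ k - 1) * ∑ ξ ∈ nthRootsFinset c (1 : ℂ), ξ ^ k = 0 := by
      rw [sub_mul, one_mul, ← this, sub_self]
    rcases mul_eq_zero.1 h2 with h | h
    · exact absurd (sub_eq_zero.1 h) hζk
    · exact h

open PowerSeries Polynomial Finset in
/-- For `α^c ≠ 1`: `Σ_{ξ ∈ μ_c, ξ ≠ 1} ℬ_n(α·ξ) = c^{n+1}·ℬ_n(α^c) − ℬ_n(α)`. -/
theorem sum_twistedBernoulli_mul_nthRoots (c : ℕ) (hc : 2 ≤ c) (α : ℂ)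
    (hα : α ^ c ≠ 1) (n : ℕ) :
    ∑ ξ ∈ (Polynomial.nthRootsFinset c (1 : ℂ)).erase 1, twistedBernoulli (α * ξ) n
      = (c : ℂ) ^ (n + 1) * twistedBernoulli (α ^ c) n - twistedBernoulli α n := by
  have hcpos : 0 < c := lt_of_lt_of_le two_pos hc
  set E := PowerSeries.exp ℂ with hE
  set u : ℂ → ℂ⟦X⟧ := fun β => 1 - PowerSeries.C β * E with hu
  have hconst : ∀ β : ℂ, constantCoeff (u β) = 1 - β := by
    intro β
    simp [hu, hE, PowerSeries.constantCoeff_exp]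
  have hrescaleC : ∀ β : ℂ, rescale (c : ℂ) (PowerSeries.C β) = PowerSeries.C β := by
    intro β
    ext m
    rcases eq_or_ne m 0 with rfl | hm
    · simp [coeff_rescale]
    · simp [coeff_rescale, PowerSeries.coeff_C, hm]
  -- roots all give nonzero constant coefficient
  have hne1 : ∀ ξ ∈ nthRootsFinset c (1 : ℂ), α * ξ ≠ 1 := by
    intro ξ hξ h1
    apply hα
    have : (α * ξ) ^ c = 1 := by rw [h1, one_pow]
    rwa [mul_pow, (mem_nthRootsFinset hcpos 1).1 hξ, mul_one] at this
  set W : ℂ⟦X⟧ := 1 - PowerSeries.C (α ^ c) * rescale (c : ℂ) E with hW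
  -- W = rescale c (u (α^c))
  have hWres : W = rescale (c : ℂ) (u (α ^ c)) := by
    rw [hu, hW]
    simp only [map_sub, map_one, map_mul, hrescaleC]
  -- key product: u (αξ) * geom sum = W
  have hgeom : ∀ ξ ∈ nthRootsFinset c (1 : ℂ),
      u (α * ξ) * (∑ k ∈ Finset.range c, (PowerSeries.C (α * ξ) * E) ^ k) = W := by
    intro ξ hξ
    have h1 : (PowerSeries.C (α * ξ) * E) ^ c = PowerSeries.C (α ^ c) * rescale (c : ℂ) E := by
      rw [mul_pow, ← map_pow, mul_pow, (mem_nthRootsFinset hcpos 1).1 hξ, mul_one,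
        PowerSeries.exp_pow_eq_rescale_exp]
    have := geom_sum_mul (PowerSeries.C (α * ξ) * E) c
    -- (∑ x^k) * (x - 1) = x^c - 1
    have h2 : u (α * ξ) * (∑ k ∈ Finset.range c, (PowerSeries.C (α * ξ) * E) ^ k)
        = 1 - (PowerSeries.C (α * ξ) * E) ^ c := by
      rw [hu]
      have := geom_sum_mul (PowerSeries.C (α * ξ) * E) c
      ring_nf
      ring_nf at this
      linear_combination -this
    rw [h2, h1, hW]
  -- A * W = C c
  set A : ℂ⟦X⟧ := ∑ ξ ∈ nthRootsFinset c (1 : ℂ), (u (α * ξ))⁻¹ with hA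
  have hAW : A * W = PowerSeries.C (c : ℂ) := by
    rw [hA, Finset.sum_mul]
    have heach : ∀ ξ ∈ nthRootsFinset c (1 : ℂ),
        (u (α * ξ))⁻¹ * W = ∑ k ∈ Finset.range c, (PowerSeries.C (α * ξ) * E) ^ k := by
      intro ξ hξ
      have hcc : constantCoeff (u (α * ξ)) ≠ 0 := by
        rw [hconst]; intro h; exact hne1 ξ hξ (by linear_combination -h)
      rw [← hgeom ξ hξ, ← mul_assoc, PowerSeries.inv_mul_cancel _ hcc, one_mul]
    rw [Finset.sum_congr rfl heach, Finset.sum_comm]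
    have : ∀ k ∈ Finset.range c,
        ∑ ξ ∈ nthRootsFinset c (1 : ℂ), (PowerSeries.C (α * ξ) * E) ^ k
        = (if k = 0 then (c : ℂ⟦X⟧) else 0) * (PowerSeries.C α * E) ^ k := by
      intro k hk
      have : ∀ ξ : ℂ, (PowerSeries.C (α * ξ) * E) ^ k
          = PowerSeries.C (ξ ^ k) * (PowerSeries.C α * E) ^ k := by
        intro ξ
        rw [map_mul, map_pow]
        ring
      simp only [this, ← Finset.sum_mul, ← map_sum,
        tb_sum_pow_nthRoots hcpos (Finset.mem_range.1 hk)]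
      split_ifs with h
      · simp
      · simp
    rw [Finset.sum_congr rfl this]
    rw [Finset.sum_eq_single 0]
    · simp
    · intro k _ hk; simp [hk]
    · intro h; exact absurd (Finset.mem_range.2 hcpos) h
  -- W is a unit with inverse rescale c ((u (α^c))⁻¹)
  have hWV : W * rescale (c : ℂ) ((u (α ^ c))⁻¹) = 1 := by
    rw [hWres, ← map_mul, mul_comm, PowerSeries.inv_mul_cancel _ (by
      rw [hconst]; intro h; exact hα (by linear_combination -h)), map_one]
  have hAval : A = PowerSeries.C (c : ℂ) * rescale (c : ℂ) ((u (α ^ c))⁻¹) := by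
    calc A = A * (W * rescale (c : ℂ) ((u (α ^ c))⁻¹)) := by rw [hWV, mul_one]
    _ = (A * W) * rescale (c : ℂ) ((u (α ^ c))⁻¹) := by ring
    _ = _ := by rw [hAW]
  -- now take coefficients
  have h1mem : (1 : ℂ) ∈ nthRootsFinset c (1 : ℂ) := one_mem_nthRootsFinset hcpos
  have hA' : PowerSeries.coeff n A
      = (c : ℂ) * ((c : ℂ) ^ n * PowerSeries.coeff n (u (α ^ c))⁻¹) := by
    rw [hAval, PowerSeries.coeff_C_mul, coeff_rescale]
  have hsum : ∑ ξ ∈ (nthRootsFinset c (1 : ℂ)).erase 1, twistedBernoulli (α * ξ) n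
      = (n.factorial : ℂ) * PowerSeries.coeff n A
        - (n.factorial : ℂ) * PowerSeries.coeff n (u α)⁻¹ := by
    have hcong : ∀ ξ ∈ (nthRootsFinset c (1 : ℂ)).erase 1, twistedBernoulli (α * ξ) n
        = (n.factorial : ℂ) * PowerSeries.coeff n (u (α * ξ))⁻¹ := fun ξ _ => rfl
    rw [Finset.sum_congr rfl hcong, Finset.sum_erase_eq_sub h1mem, mul_one,
      ← Finset.mul_sum, hA, map_sum]
  have hnb1 : twistedBernoulli (α ^ c) n
      = (n.factorial : ℂ) * PowerSeries.coeff n (u (α ^ c))⁻¹ := rfl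
  have hnb2 : twistedBernoulli α n = (n.factorial : ℂ) * PowerSeries.coeff n (u α)⁻¹ := rfl
  rw [hsum, hA', hnb1, hnb2]
  ring
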